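/- The sequent A ⊢ A ⊗ I is derivable in LSkT for every formula A, while X ⊗ I ⊢ X is not derivable in LSkT for an atom X. -/
import Mathlib


/-- Formulae of left skew monoidal closed logic: atoms, unit I, ⊗, ⊸. -/
inductive Fma : Type
  | atom : ℕ → Fma
  | I : Fma
  | tens : Fma → Fma → Fma
  | lolli : Fma → Fma → Fma

/-- Trees: formulae, the empty tree, and pairing. -/
inductive Tr : Type
  | fma : Fma → Tr
  | emp : Tr
  | pair : Tr → Tr → Tr

/-- Contexts: trees with a single hole. -/
inductive Ctx : Type
  | hole : Ctx
  | pairL : Ctx → Tr → Ctx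
  | pairR : Tr → Ctx → Ctx

/-- Substitution of a tree into the hole of a context. -/
def plug : Ctx → Tr → Tr
  | Ctx.hole, U => U
  | Ctx.pairL C T, U => Tr.pair (plug C U) T
  | Ctx.pairR T C, U => Tr.pair T (plug C U)

/-- Derivability in the tree sequent calculus LSkT: `TDer T A` means `T ⊢ A`. -/
inductive TDer : Tr → Fma → Prop
  | ax {A} : TDer (Tr.fma A) A
  | IL {T C} : TDer (plug T Tr.emp) C → TDer (plug T (Tr.fma Fma.I)) C
  | IR : TDer Tr.emp Fma.I
  | tensL {T A B C} : TDer (plug T (Tr.pair (Tr.fma A) (Tr.fma B))) C →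
      TDer (plug T (Tr.fma (Fma.tens A B))) C
  | tensR {T U A B} : TDer T A → TDer U B → TDer (Tr.pair T U) (Fma.tens A B)
  | lolliL {T U A B C} : TDer U A → TDer (plug T (Tr.fma B)) C →
      TDer (plug T (Tr.pair (Tr.fma (Fma.lolli A B)) U)) C
  | lolliR {T A B} : TDer (Tr.pair T (Tr.fma A)) B → TDer T (Fma.lolli A B)
  | assoc {T U₀ U₁ U₂ C} : TDer (plug T (Tr.pair U₀ (Tr.pair U₁ U₂))) C →
      TDer (plug T (Tr.pair (Tr.pair U₀ U₁) U₂)) C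
  | unitL {T U C} : TDer (plug T U) C → TDer (plug T (Tr.pair Tr.emp U)) C
  | unitR {T U C} : TDer (plug T (Tr.pair U Tr.emp)) C → TDer (plug T U) C

def f (a _b : ℕ) : ℕ := if a = 0 then 0 else 2

/-- Internal hom in the countermodel. -/
def fhom (_b c : ℕ) : ℕ := if 2 ≤ c then 2 else 0

/-- Evaluation of formulae. -/
def ev : Fma → ℕ
  | Fma.atom _ => 1
  | Fma.I => 0
  | Fma.tens A B => f (ev A) (ev B)
  | Fma.lolli A B => fhom (ev A) (ev B)

/-- Evaluation of trees. -/
def evT : Tr → ℕ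
  | Tr.fma A => ev A
  | Tr.emp => 0
  | Tr.pair T U => f (evT T) (evT U)

lemma f_mono {a b a' b' : ℕ} (h : a ≤ a') (_h' : b ≤ b') : f a b ≤ f a' b' := by
  unfold f
  split
  · simp
  · rename_i ha
    have : a' ≠ 0 := by omega
    simp [this]

lemma ev_le_two : ∀ A, ev A ≤ 2 := by
  intro A; cases A <;> simp [ev, f, fhom] <;> split <;> omega

lemma evT_le_two : ∀ T, evT T ≤ 2 := by
  intro T; cases T with
  | fma A => exact ev_le_two A
  | emp => simp [evT]
  | pair T U => simp [evT, f]; split <;> omega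

lemma plug_mono {U V : Tr} (h : evT U ≤ evT V) : ∀ C, evT (plug C U) ≤ evT (plug C V) := by
  intro C
  induction C with
  | hole => exact h
  | pairL C T ih => exact f_mono ih le_rfl
  | pairR T C ih => exact f_mono le_rfl ih

lemma soundness {T C} (d : TDer T C) : evT T ≤ ev C := by
  induction d with
  | ax => exact le_rfl
  | IL _ ih =>
      refine le_trans (plug_mono ?_ _) ih
      simp [evT, ev]
  | IR => simp [evT, ev]
  | tensL _ ih =>
      refine le_trans (plug_mono ?_ _) ih
      simp [evT, ev]
  | tensR _ _ ih1 ih2 => exact f_mono ih1 ih2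
  | lolliL _ _ _ ihB =>
      rename_i T' U' A' B' C' _d1 _d2 _ih1
      refine le_trans (plug_mono ?_ _) ihB
      show evT (Tr.pair (Tr.fma (Fma.lolli A' B')) U') ≤ evT (Tr.fma B')
      simp only [evT, ev]
      unfold f fhom
      by_cases hc : 2 ≤ ev B' <;> simp [hc]
  | lolliR _ ih =>
      show _ ≤ fhom _ _
      unfold fhom
      split
      · exact evT_le_two _
      · rename_i h
        have h2 : f (evT _) (ev _) ≤ ev _ := ih
        unfold f at h2
        split at h2
        · omega
        · omega
  | assoc _ ih =>
      refine le_trans (plug_mono ?_ _) ih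
      show f (f _ _) _ ≤ f _ (f _ _)
      unfold f
      split
      · rename_i h; simp [h]
      · rename_i h; simp [h]
  | unitL _ ih =>
      refine le_trans (plug_mono ?_ _) ih
      show f 0 _ ≤ _
      simp [f]
  | unitR _ ih =>
      refine le_trans (plug_mono ?_ _) ih
      show evT _ ≤ f _ _
      unfold f
      split
      · omega
      · exact evT_le_two _

/-- `A ⊢ A ⊗ I` is derivable in LSkT for every `A`, but `X ⊗ I ⊢ X` is not
derivable for an atom `X`. -/
theorem rho_derivable_lam_like_underivable :
    (∀ A : Fma, TDer (Tr.fma A) (Fma.tens A Fma.I)) ∧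
    (∀ X : ℕ, ¬ TDer (Tr.fma (Fma.tens (Fma.atom X) Fma.I)) (Fma.atom X)) := by
  constructor
  · intro A
    have h : TDer (plug Ctx.hole (Tr.pair (Tr.fma A) Tr.emp)) (Fma.tens A Fma.I) :=
      TDer.tensR TDer.ax TDer.IR
    exact TDer.unitR (T := Ctx.hole) (U := Tr.fma A) h
  · intro X h
    have := soundness h
    simp [evT, ev, f, fhom] at this
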